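/- (Lemma 1, LHS-to-compatibility direction, finite version.) Let Λ be a finite set, let ρ_λ (λ ∈ Λ) be 2×2 density matrices (positive semidefinite, trace 1), and let p(λ) ≥ 0 with Σ_λ p(λ) = 1 and Σ_λ p(λ) ρ_λ = I/2. Let r ∈ [0,1], let {M_a}_{a∈F} be a qubit POVM, and suppose there are numbers p(a|λ) ∈ [0,1] with Σ_{a∈F} p(a|λ) = 1 for each λ, such that Tr_A[(M_a ⊗ I) ρ_W(r)] = Σ_{λ∈Λ} p(λ) p(a|λ) ρ_λ for all a ∈ F. Then the matrices Π_λ := 2 p(λ) σy·ρ_λᵀ·σy form a qubit POVM (positive semidefinite summing to I), and r·M_a + (1−r)(Tr M_a / 2)·I = Σ_{λ∈Λ} p(a|λ) Π_λ for all a ∈ F. -/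

import Mathlib

open MeasureTheory Matrix Kronecker
open scoped RealInnerProductSpace ENNReal ComplexOrder

noncomputable section

/-- 2×2 complex matrices (qubit operators). -/
abbrev Mat2 := Matrix (Fin 2) (Fin 2) ℂ
/-- 4×4 complex matrices indexed by two qubits. -/
abbrev Mat4 := Matrix (Fin 2 × Fin 2) (Fin 2 × Fin 2) ℂ
/-- ℝ³ with the Euclidean norm. -/
abbrev E3 := EuclideanSpace ℝ (Fin 3)

/-- Pauli matrix σx. -/
def sx : Mat2 := !![0, 1; 1, 0]
/-- Pauli matrix σy. -/
def sy : Mat2 := !![0, -Complex.I; Complex.I, 0]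
/-- Pauli matrix σz. -/
def sz : Mat2 := !![1, 0; 0, -1]

/-- Pauli vector `v · σ = v₁ σx + v₂ σy + v₃ σz`. -/
def dotS (v : E3) : Mat2 := (v 0 : ℂ) • sx + (v 1 : ℂ) • sy + (v 2 : ℂ) • sz

/-- The singlet state vector `|Ψ⁻⟩ = (|01⟩ - |10⟩)/√2`. -/
def psiMinus : Fin 2 × Fin 2 → ℂ := fun p =>
  if p = (0, 1) then (1 : ℂ) / Real.sqrt 2 else if p = (1, 0) then -(1 : ℂ) / Real.sqrt 2 else 0

/-- The projector `|Ψ⁻⟩⟨Ψ⁻|`. -/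
def psiProj : Mat4 := Matrix.of fun p q => psiMinus p * star (psiMinus q)

/-- The two-qubit Werner state `ρ_W(r) = r |Ψ⁻⟩⟨Ψ⁻| + (1-r) I/4`. -/
def werner (r : ℝ) : Mat4 := (r : ℂ) • psiProj + (((1 - r : ℝ) : ℂ) / 4) • (1 : Mat4)

/-- Partial trace over the first qubit: `(Tr_A X)_{jk} = Σ_i X_{(i,j),(i,k)}`. -/
def ptraceA (X : Mat4) : Mat2 := Matrix.of fun j k => ∑ i : Fin 2, X (i, j) (i, k)

/-- The unit sphere S² in ℝ³. -/
abbrev S2 := Metric.sphere (0 : E3) 1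

/-- The surface measure on the unit sphere (total mass 4π). -/
def sphereMeasure : Measure S2 := (volume : Measure E3).toSphere

/-- The covariant POVM density `Π_n = (1/(4π))(I + n·σ)`. -/
def Pn (n : E3) : Mat2 := ((4 * Real.pi)⁻¹ : ℝ) • ((1 : Mat2) + dotS n)


lemma rsmul (c : ℝ) (A : Mat2) : c • A = ((c : ℂ)) • A := by
  ext i j; simp [Matrix.smul_apply, Complex.real_smul]

lemma syH : syᴴ = sy := by
  ext i j; fin_cases i <;> fin_cases j <;> simp [sy, Matrix.conjTranspose_apply]

lemma syT : syᵀ = -sy := by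
  ext i j; fin_cases i <;> fin_cases j <;> simp [sy]

lemma sysy : sy * sy = 1 := by
  ext i j; fin_cases i <;> fin_cases j <;>
    simp [sy, Matrix.mul_apply, Fin.sum_univ_two, Matrix.one_apply]

lemma conjc (A : Mat2) : sy * (sy * Aᵀ * sy)ᵀ * sy = A := by
  rw [Matrix.transpose_mul, Matrix.transpose_mul, Matrix.transpose_transpose, syT]
  calc sy * (-sy * (A * -sy)) * sy = (sy * sy) * A * (sy * sy) := by
        simp [Matrix.mul_assoc, Matrix.mul_neg, Matrix.neg_mul]
    _ = A := by rw [sysy]; simp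

lemma key (r : ℝ) (M : Mat2) :
    ptraceA ((M ⊗ₖ (1 : Mat2)) * werner r) =
      ((r : ℂ)/2) • (sy * Mᵀ * sy) + (((1 - r : ℝ) : ℂ)/4 * M.trace) • (1 : Mat2) := by
  have h2 : ((Real.sqrt 2 : ℝ) : ℂ) * ((Real.sqrt 2 : ℝ) : ℂ) = 2 := by
    rw [← Complex.ofReal_mul, Real.mul_self_sqrt (by norm_num)]; norm_num
  have hne : ((Real.sqrt 2 : ℝ) : ℂ) ≠ 0 := by
    intro h; rw [h, mul_zero] at h2; norm_num at h2
  ext j k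
  fin_cases j <;> fin_cases k <;>
    simp [ptraceA, Matrix.mul_apply, Fintype.sum_prod_type, werner, psiProj, psiMinus,
      Fin.sum_univ_two, Matrix.kroneckerMap_apply, sy, Matrix.one_apply, Matrix.trace,
      Matrix.smul_apply, Matrix.diag, Matrix.add_apply, div_eq_mul_inv,
      Matrix.vecMul, dotProduct] <;>
    field_simp <;> ring_nf <;> simp only [pow_two, Complex.I_mul_I, h2] <;> ring

/-- Lemma 1, LHS ⟹ compatibility, finite version. -/
theorem LHS_to_compatibility {Λ F : Type} [Fintype Λ] [Fintype F]
    (ρ : Λ → Mat2) (hρpsd : ∀ l, (ρ l).PosSemidef) (hρtr : ∀ l, (ρ l).trace = 1)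
    (pl : Λ → ℝ) (hpl : ∀ l, 0 ≤ pl l) (hplsum : ∑ l, pl l = 1)
    (havg : ∑ l, (pl l : ℂ) • ρ l = (1/2 : ℂ) • (1 : Mat2))
    (r : ℝ) (hr : r ∈ Set.Icc (0 : ℝ) 1)
    (M : F → Mat2) (hMpsd : ∀ a, (M a).PosSemidef) (hMsum : ∑ a, M a = 1)
    (p : F → Λ → ℝ) (hp : ∀ a l, p a l ∈ Set.Icc (0 : ℝ) 1) (hpn : ∀ l, ∑ a, p a l = 1)
    (hsim : ∀ a, ptraceA ((M a ⊗ₖ (1 : Mat2)) * werner r) =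
      ∑ l, ((pl l * p a l : ℝ) : ℂ) • ρ l) :
    (∀ l, ((2 * pl l : ℝ) • (sy * (ρ l)ᵀ * sy)).PosSemidef) ∧
    (∑ l, (2 * pl l : ℝ) • (sy * (ρ l)ᵀ * sy)) = 1 ∧
    (∀ a, (r : ℂ) • M a + (((1 - r : ℝ) : ℂ) * ((M a).trace / 2)) • (1 : Mat2) =
      ∑ l, (p a l : ℂ) • ((2 * pl l : ℝ) • (sy * (ρ l)ᵀ * sy))) := by
  refine ⟨?_, ?_, ?_⟩
  · intro l
    have h1 : ((ρ l)ᵀ).PosSemidef := (hρpsd l).transpose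
    set c := Real.sqrt (2 * pl l) with hc
    have hcc : (c : ℂ) * (c : ℂ) = ((2 * pl l : ℝ) : ℂ) := by
      rw [← Complex.ofReal_mul, Real.mul_self_sqrt (by have := hpl l; linarith)]
    have hB := h1.mul_mul_conjTranspose_same ((c : ℂ) • sy)
    have hBH : ((c : ℂ) • sy)ᴴ = (c : ℂ) • sy := by
      simp [Matrix.conjTranspose_smul, syH, Complex.star_def, Complex.conj_ofReal]
    rw [hBH] at hB
    have : ((c : ℂ) • sy) * (ρ l)ᵀ * ((c : ℂ) • sy)
        = (2 * pl l : ℝ) • (sy * (ρ l)ᵀ * sy) := by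
      rw [rsmul, Matrix.smul_mul, Matrix.smul_mul, Matrix.mul_smul, smul_smul, hcc]
    rwa [this] at hB
  · have hsum2 : ∑ l, ((2 * pl l : ℝ) : ℂ) • (ρ l)ᵀ = 1 := by
      have : ∑ l, ((2 * pl l : ℝ) : ℂ) • ρ l = 1 := by
        have : ∑ l, ((2 * pl l : ℝ) : ℂ) • ρ l = (2 : ℂ) • ∑ l, (pl l : ℂ) • ρ l := by
          rw [Finset.smul_sum]
          refine Finset.sum_congr rfl fun l _ => ?_
          rw [smul_smul]; push_cast; ring_nf
        rw [this, havg, smul_smul]; norm_num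
      calc ∑ l, ((2 * pl l : ℝ) : ℂ) • (ρ l)ᵀ
          = (∑ l, ((2 * pl l : ℝ) : ℂ) • ρ l)ᵀ := by
            rw [Matrix.transpose_sum]
            exact Finset.sum_congr rfl fun l _ => (Matrix.transpose_smul _ _).symm
        _ = 1 := by rw [this, Matrix.transpose_one]
    calc ∑ l, (2 * pl l : ℝ) • (sy * (ρ l)ᵀ * sy)
        = sy * (∑ l, ((2 * pl l : ℝ) : ℂ) • (ρ l)ᵀ) * sy := by
          rw [Matrix.mul_sum, Matrix.sum_mul]
          refine Finset.sum_congr rfl fun l _ => ?_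
          rw [rsmul, Matrix.mul_smul, Matrix.smul_mul]
      _ = 1 := by rw [hsum2, Matrix.mul_one, sysy]
  · intro a
    have hR : ∀ l, (p a l : ℂ) • ((2 * pl l : ℝ) • (sy * (ρ l)ᵀ * sy))
        = (2 : ℂ) • (sy * (((pl l * p a l : ℝ) : ℂ) • ρ l)ᵀ * sy) := by
      intro l
      rw [rsmul, smul_smul, Matrix.transpose_smul, Matrix.mul_smul, Matrix.smul_mul, smul_smul]
      congr 1; push_cast; ring
    rw [Finset.sum_congr rfl (fun l _ => hR l), ← Finset.smul_sum, ← Matrix.sum_mul,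
      ← Matrix.mul_sum, ← Matrix.transpose_sum, ← hsim a, key]
    rw [Matrix.transpose_add, Matrix.transpose_smul, Matrix.transpose_smul,
      Matrix.transpose_one, Matrix.mul_add, Matrix.add_mul,
      Matrix.mul_smul, Matrix.smul_mul, Matrix.mul_smul, Matrix.smul_mul,
      conjc, Matrix.mul_one, sysy, smul_add, smul_smul, smul_smul]
    congr 1
    · congr 1; ring
    · congr 1; ring
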